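/- With p ∈ (0,1/2), k ≥ 3, x₊ := min(1/2, p/((k-1)(1-2p))), and x₋ := (2/5)·x₊, the quantity Δ(x₋) := (log((1-x₋)/x₋))·(p - (1-2p)(k-1)x₋) + (log(1-x₋))·(1-2p)·k is strictly positive. -/

import Mathlib

set_option maxHeartbeats 2000000 in
theorem stmt_11 (p : ℝ) (hp1 : 0 < p) (hp2 : p < 1/2) (k : ℕ) (hk : 3 ≤ k)
    (xplus xminus : ℝ) (hx : xplus = min (1/2) (p / (((k : ℝ) - 1) * (1 - 2 * p))))
    (hx' : xminus = (2/5) * xplus) :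
    0 < Real.log ((1 - xminus) / xminus) * (p - (1 - 2 * p) * ((k : ℝ) - 1) * xminus)
      + Real.log (1 - xminus) * ((1 - 2 * p) * k) := by
  have hk' : (3:ℝ) ≤ (k:ℝ) := by exact_mod_cast hk
  have h2p : 0 < 1 - 2*p := by linarith
  have hden : 0 < ((k:ℝ)-1) * (1-2*p) := mul_pos (by linarith) h2p
  have hApos : 0 < p / (((k:ℝ)-1)*(1-2*p)) := div_pos hp1 hden
  have hxp_pos : 0 < xplus := by rw [hx]; exact lt_min (by norm_num) hApos
  have hxp_le : xplus ≤ 1/2 := by rw [hx]; exact min_le_left _ _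
  have hxp_leA : xplus ≤ p / (((k:ℝ)-1)*(1-2*p)) := by rw [hx]; exact min_le_right _ _
  have h1 : xplus * (((k:ℝ)-1)*(1-2*p)) ≤ p := (le_div_iff₀ hden).mp hxp_leA
  have hxm_pos : 0 < xminus := by rw [hx']; linarith
  have hxm_le : xminus ≤ 1/5 := by rw [hx']; linarith
  have hxmA : xminus * (((k:ℝ)-1)*(1-2*p)) ≤ (2/5) * p := by
    rw [hx']; nlinarith [h1]
  have h1x : 0 < 1 - xminus := by linarith
  have hlog1 : Real.log 4 ≤ Real.log ((1-xminus)/xminus) := by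
    apply Real.log_le_log (by norm_num)
    rw [le_div_iff₀ hxm_pos]; linarith
  have hlog2 : -(5/4) * xminus ≤ Real.log (1 - xminus) := by
    have h := Real.log_le_sub_one_of_pos (x := (1-xminus)⁻¹) (by positivity)
    rw [Real.log_inv] at h
    have hinv : (1-xminus)⁻¹ - 1 = xminus / (1-xminus) := by field_simp; ring
    have h3 : xminus / (1-xminus) ≤ (5/4)*xminus := by
      rw [div_le_iff₀ h1x]; nlinarith
    linarith
  have hl4 : (5/4:ℝ) < Real.log 4 := by
    have h4 : Real.log 4 = 2 * Real.log 2 := by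
      rw [show (4:ℝ) = 2^2 by norm_num, Real.log_pow]; push_cast; ring
    have := Real.log_two_gt_d9
    rw [h4]; linarith
  have hfac1 : (3/5)*p ≤ p - (1-2*p)*((k:ℝ)-1)*xminus := by nlinarith [hxmA]
  have hT1 : Real.log 4 * ((3/5)*p) ≤
      Real.log ((1-xminus)/xminus) * (p - (1-2*p)*((k:ℝ)-1)*xminus) :=
    mul_le_mul hlog1 hfac1 (by positivity) (by linarith)
  have hT2 : -(3/4)*p ≤ Real.log (1-xminus) * ((1-2*p)*k) := by
    have hc : 0 ≤ (1-2*p)*(k:ℝ) := by positivity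
    have ha : (-(5/4)*xminus) * ((1-2*p)*k) ≤ Real.log (1-xminus) * ((1-2*p)*k) :=
      mul_le_mul_of_nonneg_right hlog2 hc
    have hprod : 0 ≤ xminus*(1-2*p)*((k:ℝ)-3) :=
      mul_nonneg (mul_nonneg hxm_pos.le h2p.le) (by linarith)
    have hb : xminus*((1-2*p)*k) ≤ (3/5)*p := by nlinarith [hxmA, hprod]
    linarith [ha, hb]
  have hfin : (3/4)*p < Real.log 4 * ((3/5)*p) := by
    nlinarith [mul_pos (by linarith : (0:ℝ) < Real.log 4 - 5/4) hp1]
  linarith [hT1, hT2]
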